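/- Let X be a proper geodesic metric space, let D > 0, let Y ⊆ X be a nonempty closed D-contracting subset, and let g be an isometry of X with g(Y) = Y. Then inf_{x∈X} d(x, gx) ≤ inf_{y∈Y} d(y, gy) ≤ inf_{x∈X} d(x, gx) + 4D. -/

import Mathlib

/-- `c : [a,b] → X` is a geodesic. -/
def IsGeodesic {X : Type*} [MetricSpace X] (c : ℝ → X) (a b : ℝ) : Prop :=
  a ≤ b ∧ ∀ s ∈ Set.Icc a b, ∀ t ∈ Set.Icc a b, dist (c s) (c t) = |s - t|

/-- Every two points are joined by a geodesic. -/
def GeodesicSpace (X : Type*) [MetricSpace X] : Prop :=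
  ∀ x y : X, ∃ (a b : ℝ) (c : ℝ → X), IsGeodesic c a b ∧ c a = x ∧ c b = y

/-- The set of projections of the point `x` onto `Y`. -/
def projSet {X : Type*} [MetricSpace X] (Y : Set X) (x : X) : Set X :=
  {p | p ∈ Y ∧ dist x p = Metric.infDist x Y}

/-- `Π_Y(Z)`: the set of projections onto `Y` of points of `Z`. -/
def projOn {X : Type*} [MetricSpace X] (Y Z : Set X) : Set X :=
  ⋃ z ∈ Z, projSet Y z

/-- The `A`-neighborhood `Y^{+A}` of `Y`. -/
def nbhd {X : Type*} [MetricSpace X] (Y : Set X) (A : ℝ) : Set X :=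
  {x | Metric.infDist x Y ≤ A}

/-- `Y` is `D`-contracting: the projection onto `Y` of any geodesic staying at
distance at least `D` from `Y` has diameter at most `D`. -/
def IsContracting {X : Type*} [MetricSpace X] (D : ℝ) (Y : Set X) : Prop :=
  ∀ (c : ℝ → X) (a b : ℝ), IsGeodesic c a b →
    (∀ t ∈ Set.Icc a b, D ≤ Metric.infDist (c t) Y) →
    EMetric.diam (projOn Y (c '' Set.Icc a b)) ≤ ENNReal.ofReal D

-- auxiliary: distance between two members of a set with small diam
lemma dist_le_of_ediam {X : Type*} [MetricSpace X] {S : Set X} {D : ℝ} (hD : 0 ≤ D)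
    (h : EMetric.diam S ≤ ENNReal.ofReal D) {p q : X} (hp : p ∈ S) (hq : q ∈ S) :
    dist p q ≤ D := by
  rw [← edist_le_ofReal hD]
  exact le_trans (EMetric.edist_le_diam_of_mem hp hq) h

lemma projSet_nonempty {X : Type*} [MetricSpace X] [ProperSpace X] {Y : Set X}
    (hYne : Y.Nonempty) (hYcl : IsClosed Y) (x : X) : (projSet Y x).Nonempty := by
  obtain ⟨y, hy, hd⟩ := hYcl.exists_infDist_eq_dist hYne x
  exact ⟨y, hy, hd.symm⟩

lemma proj_coarse_lip {X : Type*} [MetricSpace X] [ProperSpace X] {D : ℝ} (hD : 0 < D)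
    {Y : Set X} (hYne : Y.Nonempty) (hYcl : IsClosed Y) (hY : IsContracting D Y)
    {a b : ℝ} {c : ℝ → X} (hc : IsGeodesic c a b) {p q : X}
    (hp : p ∈ projSet Y (c a)) (hq : q ∈ projSet Y (c b)) :
    dist p q ≤ dist (c a) (c b) + 4 * D := by
  obtain ⟨hab, hiso⟩ := hc
  have hmem_a : a ∈ Set.Icc a b := ⟨le_refl a, hab⟩
  have hmem_b : b ∈ Set.Icc a b := ⟨hab, le_refl b⟩
  have hdab : dist (c a) (c b) = b - a := by
    rw [hiso a hmem_a b hmem_b, abs_of_nonpos (by linarith)]; ring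
  set f : ℝ → ℝ := fun t => Metric.infDist (c t) Y with hf
  set S : Set ℝ := {t ∈ Set.Icc a b | f t ≤ D} with hS
  -- f is 1-Lipschitz on Icc
  have hflip : ∀ s ∈ Set.Icc a b, ∀ t ∈ Set.Icc a b, f t ≤ f s + |s - t| := by
    intro s hs t ht
    calc f t ≤ f s + dist (c t) (c s) := Metric.infDist_le_infDist_add_dist
    _ = f s + |s - t| := by rw [dist_comm, hiso s hs t ht]
  by_cases hSne : S.Nonempty
  · -- S nonempty: take t1 = sInf S, t2 = sSup S
    have hSbddb : BddBelow S := ⟨a, fun t ht => ht.1.1⟩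
    have hSbdda : BddAbove S := ⟨b, fun t ht => ht.1.2⟩
    -- S is closed
    have hccont : ContinuousOn c (Set.Icc a b) := by
      apply LipschitzOnWith.continuousOn (K := 1)
      intro s hs t ht
      rw [edist_dist, edist_dist, hiso s hs t ht, ENNReal.coe_one, one_mul,
        Real.dist_eq, ENNReal.ofReal_le_ofReal_iff (abs_nonneg _)]
    have hfcont : ContinuousOn f (Set.Icc a b) :=
      (Metric.continuous_infDist_pt Y).comp_continuousOn hccont
    have hScl : IsClosed S := by
      have : S = Set.Icc a b ∩ f ⁻¹' Set.Iic D := by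
        ext t; simp [hS, Set.mem_setOf_eq, Set.mem_inter_iff, and_comm]
      rw [this]
      exact (hfcont.preimage_isClosed_of_isClosed isClosed_Icc isClosed_Iic)
    set t1 := sInf S with ht1
    set t2 := sSup S with ht2
    have ht1S : t1 ∈ S := hScl.csInf_mem hSne hSbddb
    have ht2S : t2 ∈ S := hScl.csSup_mem hSne hSbdda
    have ht12 : t1 ≤ t2 := csInf_le_csSup hSne hSbddb hSbdda
    -- outside [t1,t2], f > D
    have hout1 : ∀ t, a ≤ t → t < t1 → D < f t := by
      intro t hta htt1
      by_contra h
      exact absurd (csInf_le hSbddb ⟨⟨hta, le_trans (le_of_lt htt1) ht1S.1.2⟩,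
        le_of_not_gt h⟩) (not_le.mpr htt1)
    have hout2 : ∀ t, t2 < t → t ≤ b → D < f t := by
      intro t htt2 htb
      by_contra h
      exact absurd (le_csSup hSbdda ⟨⟨le_trans ht2S.1.1 (le_of_lt htt2), htb⟩,
        le_of_not_gt h⟩) (not_le.mpr htt2)
    -- f t1 ≥ D if a < t1 (limit from left via Lipschitz)
    have hft1 : a < t1 → D ≤ f t1 := by
      intro hat1
      apply le_of_forall_pos_le_add
      intro ε hε
      set t := max a (t1 - ε) with htdef
      have hta : a ≤ t := le_max_left _ _
      have htlt : t < t1 := max_lt hat1 (by linarith)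
      have htIcc : t ∈ Set.Icc a b := ⟨hta, le_trans (le_of_lt htlt) ht1S.1.2⟩
      have h1 : D < f t := hout1 t hta htlt
      have h2 : f t ≤ f t1 + |t1 - t| :=
        hflip t1 (Set.mem_Icc.mpr ⟨le_of_lt hat1, ht1S.1.2⟩) t htIcc
      have h3 : |t1 - t| ≤ ε := by
        rw [abs_of_nonneg (by linarith)]
        have : t1 - ε ≤ t := le_max_right _ _
        linarith
      linarith
    have hft2 : t2 < b → D ≤ f t2 := by
      intro ht2b
      apply le_of_forall_pos_le_add
      intro ε hε
      set t := min b (t2 + ε) with htdef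
      have htb : t ≤ b := min_le_left _ _
      have htgt : t2 < t := lt_min ht2b (by linarith)
      have htIcc : t ∈ Set.Icc a b := ⟨le_trans ht2S.1.1 (le_of_lt htgt), htb⟩
      have h1 : D < f t := hout2 t htgt htb
      have h2 : f t ≤ f t2 + |t2 - t| :=
        hflip t2 (Set.mem_Icc.mpr ⟨ht2S.1.1, le_of_lt ht2b⟩) t htIcc
      have h3 : |t2 - t| ≤ ε := by
        rw [abs_of_nonpos (by linarith)]
        have : t ≤ t2 + ε := min_le_right _ _
        linarith
      linarith
    -- claim A : dist p (c t1) ≤ 2D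
    have hA : dist p (c t1) ≤ 2 * D := by
      rcases eq_or_lt_of_le ht1S.1.1 with heq | hat1
      · -- t1 = a
        rw [← heq]
        calc dist p (c a) = f a := by rw [dist_comm]; exact hp.2
        _ ≤ D := by rw [heq]; exact ht1S.2
        _ ≤ 2 * D := by linarith
      · -- t1 > a: use contraction on [a, t1]
        have hgeo1 : IsGeodesic c a t1 := by
          refine ⟨le_of_lt hat1, fun s hs t ht => ?_⟩
          exact hiso s ⟨hs.1, le_trans hs.2 ht1S.1.2⟩ t ⟨ht.1, le_trans ht.2 ht1S.1.2⟩
        have hge : ∀ t ∈ Set.Icc a t1, D ≤ f t := by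
          intro t ht
          rcases eq_or_lt_of_le ht.2 with heq | hlt
          · rw [heq]; exact hft1 hat1
          · exact le_of_lt (hout1 t ht.1 hlt)
        have hdiam := hY c a t1 hgeo1 hge
        obtain ⟨q1, hq1⟩ := projSet_nonempty hYne hYcl (c t1)
        have hpmem : p ∈ projOn Y (c '' Set.Icc a t1) := by
          refine Set.mem_biUnion ⟨a, ⟨le_refl a, le_of_lt hat1⟩, rfl⟩ hp
        have hq1mem : q1 ∈ projOn Y (c '' Set.Icc a t1) := by
          refine Set.mem_biUnion ⟨t1, ⟨le_of_lt hat1, le_refl t1⟩, rfl⟩ hq1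
        have h1 : dist p q1 ≤ D := dist_le_of_ediam (le_of_lt hD) hdiam hpmem hq1mem
        have h2 : dist q1 (c t1) ≤ D := by
          rw [dist_comm]; rw [hq1.2]; exact ht1S.2
        calc dist p (c t1) ≤ dist p q1 + dist q1 (c t1) := dist_triangle _ _ _
        _ ≤ 2 * D := by linarith
    -- claim B : dist q (c t2) ≤ 2D
    have hB : dist q (c t2) ≤ 2 * D := by
      rcases eq_or_lt_of_le ht2S.1.2 with heq | ht2b
      · rw [heq]
        calc dist q (c b) = f b := by rw [dist_comm]; exact hq.2
        _ ≤ D := by rw [← heq]; exact ht2S.2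
        _ ≤ 2 * D := by linarith
      · have hgeo2 : IsGeodesic c t2 b := by
          refine ⟨le_of_lt ht2b, fun s hs t ht => ?_⟩
          exact hiso s ⟨le_trans ht2S.1.1 hs.1, hs.2⟩ t ⟨le_trans ht2S.1.1 ht.1, ht.2⟩
        have hge : ∀ t ∈ Set.Icc t2 b, D ≤ f t := by
          intro t ht
          rcases eq_or_lt_of_le ht.1 with heq | hlt
          · rw [← heq]; exact hft2 ht2b
          · exact le_of_lt (hout2 t hlt ht.2)
        have hdiam := hY c t2 b hgeo2 hge
        obtain ⟨q2, hq2⟩ := projSet_nonempty hYne hYcl (c t2)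
        have hqmem : q ∈ projOn Y (c '' Set.Icc t2 b) := by
          refine Set.mem_biUnion ⟨b, ⟨le_of_lt ht2b, le_refl b⟩, rfl⟩ hq
        have hq2mem : q2 ∈ projOn Y (c '' Set.Icc t2 b) := by
          refine Set.mem_biUnion ⟨t2, ⟨le_refl t2, le_of_lt ht2b⟩, rfl⟩ hq2
        have h1 : dist q q2 ≤ D := dist_le_of_ediam (le_of_lt hD) hdiam hqmem hq2mem
        have h2 : dist q2 (c t2) ≤ D := by
          rw [dist_comm]; rw [hq2.2]; exact ht2S.2
        calc dist q (c t2) ≤ dist q q2 + dist q2 (c t2) := dist_triangle _ _ _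
        _ ≤ 2 * D := by linarith
    have hmid : dist (c t1) (c t2) = t2 - t1 := by
      rw [hiso t1 ⟨ht1S.1.1, ht1S.1.2⟩ t2 ⟨ht2S.1.1, ht2S.1.2⟩,
        abs_of_nonpos (by linarith)]; ring
    calc dist p q ≤ dist p (c t1) + dist (c t1) (c t2) + dist (c t2) q :=
          dist_triangle4 _ _ _ _
    _ ≤ 2 * D + (t2 - t1) + 2 * D := by rw [hmid, dist_comm (c t2) q]; linarith
    _ ≤ dist (c a) (c b) + 4 * D := by
        rw [hdab]
        have := ht1S.1.1; have := ht2S.1.2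
        linarith
  · -- S empty: whole geodesic is far from Y
    have hge : ∀ t ∈ Set.Icc a b, D ≤ f t := by
      intro t ht
      by_contra h
      exact hSne ⟨t, ht, le_of_not_ge (fun h' => h (lt_of_le_of_lt h' (by linarith [lt_of_not_ge h])).le)⟩
    have hdiam := hY c a b ⟨hab, hiso⟩ hge
    have hpmem : p ∈ projOn Y (c '' Set.Icc a b) :=
      Set.mem_biUnion ⟨a, hmem_a, rfl⟩ hp
    have hqmem : q ∈ projOn Y (c '' Set.Icc a b) :=
      Set.mem_biUnion ⟨b, hmem_b, rfl⟩ hq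
    have h1 : dist p q ≤ D := dist_le_of_ediam (le_of_lt hD) hdiam hpmem hqmem
    have := dist_nonneg (x := c a) (y := c b)
    linarith
theorem stmt14 {X : Type*} [MetricSpace X] [ProperSpace X] (hX : GeodesicSpace X)
    (D : ℝ) (hD : 0 < D) (Y : Set X) (hYne : Y.Nonempty) (hYcl : IsClosed Y)
    (hY : IsContracting D Y) (g : X ≃ᵢ X) (hgY : g '' Y = Y) :
    (⨅ x : X, dist x (g x)) ≤ (⨅ y : Y, dist (y : X) (g y)) ∧
    (⨅ y : Y, dist (y : X) (g y)) ≤ (⨅ x : X, dist x (g x)) + 4 * D := by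
  have hXne : Nonempty X := ⟨hYne.choose⟩
  have hYne' : Nonempty Y := ⟨⟨hYne.choose, hYne.choose_spec⟩⟩
  have hbddX : BddBelow (Set.range fun x : X => dist x (g x)) :=
    ⟨0, by rintro _ ⟨x, rfl⟩; exact dist_nonneg⟩
  have hbddY : BddBelow (Set.range fun y : Y => dist (y : X) (g y)) :=
    ⟨0, by rintro _ ⟨y, rfl⟩; exact dist_nonneg⟩
  constructor
  · exact le_ciInf fun y => ciInf_le hbddX (y : X)
  · rw [← sub_le_iff_le_add]
    apply le_ciInf
    intro x
    rw [sub_le_iff_le_add]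
    -- take a projection p of x on Y
    obtain ⟨p, hp⟩ := projSet_nonempty hYne hYcl x
    -- g p is a projection of g x on Y
    have hgp : g p ∈ projSet Y (g x) := by
      constructor
      · rw [← hgY]; exact ⟨p, hp.1, rfl⟩
      · rw [g.dist_eq, hp.2]; conv_rhs => rw [← hgY, Metric.infDist_image g.isometry]
    -- geodesic from x to g x
    obtain ⟨a, b, c, hc, hca, hcb⟩ := hX x (g x)
    have key : dist p (g p) ≤ dist x (g x) + 4 * D := by
      have := proj_coarse_lip hD hYne hYcl hY hc
        (by rw [hca]; exact hp) (by rw [hcb]; exact hgp)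
      rwa [hca, hcb] at this
    calc (⨅ y : Y, dist (y : X) (g y)) ≤ dist ((⟨p, hp.1⟩ : Y) : X) (g (⟨p, hp.1⟩ : Y)) :=
          ciInf_le hbddY _
    _ = dist p (g p) := rfl
    _ ≤ dist x (g x) + 4 * D := key
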